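/- Let D_b ∈ [0,1] be random variables (indexed by b with probabilities p_b) such that Σ_b p_b D_b ≤ √q for some q > 0, and let h be the binary entropy function. Then for any d' ∈ (0, 1/2], Σ_b p_b h(D_b) ≤ √q/d' + h(d'). In particular, choosing d' = (2/3)^{2/3} q^{1/3}, one obtains Σ_b p_b h(D_b) ≤ 3(3/2)^{2/3} q^{1/6} = O(q^{1/6}). -/

import Mathlib

/-- Binary entropy function (base-2 logarithms). -/
noncomputable def binEnt (x : ℝ) : ℝ :=
  -x * Real.logb 2 x - (1 - x) * Real.logb 2 (1 - x)

lemma binEnt_eq (x : ℝ) : binEnt x = Real.binEntropy x / Real.log 2 := by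
  unfold binEnt Real.binEntropy Real.logb
  rw [Real.log_inv, Real.log_inv]
  ring

lemma binEnt_nonneg {x : ℝ} (h0 : 0 ≤ x) (h1 : x ≤ 1) : 0 ≤ binEnt x := by
  rw [binEnt_eq]
  exact div_nonneg (Real.binEntropy_nonneg h0 h1) (Real.log_nonneg one_le_two)

lemma binEnt_le_one (x : ℝ) : binEnt x ≤ 1 := by
  rw [binEnt_eq, div_le_one (Real.log_pos one_lt_two)]
  exact Real.binEntropy_le_log_two

lemma binEnt_mono {x y : ℝ} (h0 : 0 ≤ x) (hxy : x ≤ y) (hy : y ≤ 1/2) :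
    binEnt x ≤ binEnt y := by
  rw [binEnt_eq, binEnt_eq]
  gcongr
  exact Real.binEntropy_strictMonoOn.monotoneOn
    ⟨h0, by rw [show (2:ℝ)⁻¹ = 1/2 by norm_num]; linarith⟩
    ⟨le_trans h0 hxy, by rw [show (2:ℝ)⁻¹ = 1/2 by norm_num]; exact hy⟩ hxy

-- -√x * log x ≤ 1 for 0 < x
lemma neg_sqrt_log_le {x : ℝ} (hx : 0 < x) (hx1 : x ≤ 1) : -Real.sqrt x * Real.log x ≤ 1 := by
  set t := Real.sqrt (Real.sqrt x) with ht
  have hs : 0 < Real.sqrt x := Real.sqrt_pos.2 hx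
  have htpos : 0 < t := Real.sqrt_pos.2 hs
  have ht2 : t ^ 2 = Real.sqrt x := Real.sq_sqrt hs.le
  have hx4 : x = t ^ 4 := by
    have := Real.sq_sqrt hx.le
    nlinarith [ht2]
  have hlog : Real.log x = 4 * Real.log t := by
    rw [hx4, show t^4 = t^(4:ℕ) by norm_num, Real.log_pow]; push_cast; ring
  have hl : -Real.log t ≤ 1/t - 1 := by
    have := Real.log_le_sub_one_of_pos (x := t⁻¹) (by positivity)
    rw [Real.log_inv] at this
    linarith [this, (by rw [one_div] : (1:ℝ)/t = t⁻¹).ge]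
  calc -Real.sqrt x * Real.log x = 4 * t^2 * (-Real.log t) := by rw [hlog, ← ht2]; ring
    _ ≤ 4 * t^2 * (1/t - 1) := by
        apply mul_le_mul_of_nonneg_left hl (by positivity)
    _ = 4*t - 4*t^2 := by field_simp
    _ ≤ 1 := by nlinarith [sq_nonneg (2*t - 1)]

lemma binEnt_le_three_sqrt {x : ℝ} (hx : 0 < x) (hx2 : x ≤ 1/2) :
    binEnt x ≤ 3 * Real.sqrt x := by
  have hs : 0 < Real.sqrt x := Real.sqrt_pos.2 hx
  have hsq : Real.sqrt x * Real.sqrt x = x := Real.mul_self_sqrt hx.le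
  have h1 : -x * Real.log x ≤ Real.sqrt x := by
    have h := mul_le_mul_of_nonneg_left (neg_sqrt_log_le hx (by linarith)) hs.le
    nlinarith [hsq]
  have h2 : -(1 - x) * Real.log (1 - x) ≤ x := by
    have h1x : 0 < 1 - x := by linarith
    have := Real.log_le_sub_one_of_pos (x := (1-x)⁻¹) (by positivity)
    rw [Real.log_inv] at this
    have : -Real.log (1 - x) ≤ (1-x)⁻¹ - 1 := this
    have hh : (1-x) * (-Real.log (1-x)) ≤ (1-x) * ((1-x)⁻¹ - 1) :=
      mul_le_mul_of_nonneg_left this h1x.le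
    have : (1-x) * ((1-x)⁻¹ - 1) = x := by field_simp; ring
    nlinarith
  have hxs : x ≤ Real.sqrt x * Real.sqrt (1/2) := by
    have : Real.sqrt x ≤ Real.sqrt (1/2) := Real.sqrt_le_sqrt hx2
    nlinarith
  have hhalf : Real.sqrt (1/2) ≤ 0.708 := by
    rw [show (1:ℝ)/2 = 0.5 by norm_num]
    rw [show (0.708:ℝ) = Real.sqrt (0.708^2) by rw [Real.sqrt_sq]; norm_num]
    exact Real.sqrt_le_sqrt (by norm_num)
  have hlog2 : (0.6931471803 : ℝ) < Real.log 2 := Real.log_two_gt_d9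
  have key : Real.binEntropy x ≤ Real.sqrt x * 1.708 := by
    rw [Real.binEntropy_eq_negMulLog_add_negMulLog_one_sub]
    unfold Real.negMulLog
    nlinarith
  rw [binEnt_eq, div_le_iff₀ (Real.log_pos one_lt_two)]
  nlinarith

/-- If `D_b ∈ [0,1]` with probabilities `p_b` satisfy `Σ_b p_b D_b ≤ √q` for `q > 0`, then
for any `d' ∈ (0, 1/2]` we have `Σ_b p_b h(D_b) ≤ √q/d' + h(d')`; and in particular, choosing
`d' = (2/3)^(2/3) q^(1/3)` (assumed admissible, i.e. `≤ 1/2`), one obtains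
`Σ_b p_b h(D_b) ≤ 3 (3/2)^(2/3) q^(1/6)`. -/
theorem avg_binEnt_bound {ι : Type*} [Fintype ι] (p D : ι → ℝ) (q : ℝ)
    (hq : 0 < q)
    (hp0 : ∀ b, 0 ≤ p b) (hp1 : ∑ b, p b = 1)
    (hD0 : ∀ b, 0 ≤ D b) (hD1 : ∀ b, D b ≤ 1)
    (hMean : ∑ b, p b * D b ≤ Real.sqrt q) :
    (∀ d' : ℝ, 0 < d' → d' ≤ 1 / 2 →
        ∑ b, p b * binEnt (D b) ≤ Real.sqrt q / d' + binEnt d') ∧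
      (((2 / 3 : ℝ) ^ ((2 : ℝ) / 3) * q ^ ((1 : ℝ) / 3) ≤ 1 / 2) →
        ∑ b, p b * binEnt (D b) ≤ 3 * (3 / 2 : ℝ) ^ ((2 : ℝ) / 3) * q ^ ((1 : ℝ) / 6)) := by
  have hqs : 0 ≤ Real.sqrt q := Real.sqrt_nonneg q
  have hMean0 : 0 ≤ ∑ b, p b * D b :=
    Finset.sum_nonneg fun b _ => mul_nonneg (hp0 b) (hD0 b)
  have part1 : ∀ d' : ℝ, 0 < d' → d' ≤ 1 / 2 →
      ∑ b, p b * binEnt (D b) ≤ Real.sqrt q / d' + binEnt d' := by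
    intro d' hd0 hd2
    have pt : ∀ b, binEnt (D b) ≤ D b / d' + binEnt d' := by
      intro b
      rcases le_or_gt d' (D b) with h | h
      · have h1 : binEnt (D b) ≤ 1 := binEnt_le_one _
        have h2 : (1:ℝ) ≤ D b / d' := (one_le_div hd0).2 h
        have h3 : 0 ≤ binEnt d' := binEnt_nonneg hd0.le (by linarith)
        linarith
      · have h1 := binEnt_mono (hD0 b) h.le hd2
        have h2 : 0 ≤ D b / d' := div_nonneg (hD0 b) hd0.le
        linarith
    calc ∑ b, p b * binEnt (D b) ≤ ∑ b, p b * (D b / d' + binEnt d') :=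
          Finset.sum_le_sum fun b _ => mul_le_mul_of_nonneg_left (pt b) (hp0 b)
      _ = (∑ b, p b * D b) / d' + binEnt d' := by
          simp only [mul_add, Finset.sum_add_distrib, ← Finset.sum_mul, hp1, one_mul,
            Finset.sum_div, mul_div_assoc]
      _ ≤ Real.sqrt q / d' + binEnt d' := by gcongr
  refine ⟨part1, fun hle => ?_⟩
  set c : ℝ := (2/3 : ℝ) ^ ((2:ℝ)/3) with hcdef
  have hc : 0 < c := Real.rpow_pos_of_pos (by norm_num) _
  have hq3 : 0 < q ^ ((1:ℝ)/3) := Real.rpow_pos_of_pos hq _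
  have hq6 : 0 < q ^ ((1:ℝ)/6) := Real.rpow_pos_of_pos hq _
  set d' : ℝ := c * q ^ ((1:ℝ)/3) with hd'def
  have hd0 : 0 < d' := mul_pos hc hq3
  have h1 := part1 d' hd0 hle
  have h2 := binEnt_le_three_sqrt hd0 hle
  have e2 : (3/2 : ℝ) ^ ((2:ℝ)/3) = c⁻¹ := by
    rw [hcdef, show (3/2:ℝ) = (2/3:ℝ)⁻¹ by norm_num, Real.inv_rpow (by norm_num)]
  have e3 : (2/3 : ℝ) ^ ((1:ℝ)/3) * c = 2/3 := by
    rw [hcdef, ← Real.rpow_add (by norm_num : (0:ℝ) < 2/3)]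
    norm_num
  have e1 : Real.sqrt d' = (2/3 : ℝ) ^ ((1:ℝ)/3) * q ^ ((1:ℝ)/6) := by
    rw [hd'def, Real.sqrt_eq_rpow, Real.mul_rpow hc.le hq3.le, hcdef,
      ← Real.rpow_mul (by norm_num : (0:ℝ) ≤ 2/3), ← Real.rpow_mul hq.le]
    norm_num
  have e4 : Real.sqrt q = q ^ ((1:ℝ)/3) * q ^ ((1:ℝ)/6) := by
    rw [Real.sqrt_eq_rpow, ← Real.rpow_add hq]
    norm_num
  have key : Real.sqrt q / d' + 3 * Real.sqrt d'
      = 3 * (3/2 : ℝ) ^ ((2:ℝ)/3) * q ^ ((1:ℝ)/6) := by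
    rw [e4, e1, e2, hd'def]
    field_simp
    linear_combination 3 * e3
  linarith
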